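/- Let θ be a real number with 0 < θ < π/4, and set κ₁ = cot(θ + 3π/4), κ₂ = cot(θ + π/2), κ₃ = cot(θ + π/4), κ₄ = cot θ. Then κ₁ < κ₂ < κ₃ < κ₄, all the differences appearing below are nonzero, and the cross-ratio satisfies ((κ₁ − κ₂)·(κ₄ − κ₃)) / ((κ₁ − κ₃)·(κ₄ − κ₂)) = 1/2. -/

import Mathlib

open Real

/-- Let `0 < θ < π/4` and set `κ₁ = cot(θ + 3π/4)`, `κ₂ = cot(θ + π/2)`,
`κ₃ = cot(θ + π/4)`, `κ₄ = cot θ`.  Then `κ₁ < κ₂ < κ₃ < κ₄`, the differences appearing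
in the cross-ratio are nonzero, and
`((κ₁ − κ₂)·(κ₄ − κ₃)) / ((κ₁ − κ₃)·(κ₄ − κ₂)) = 1/2`. -/
theorem lie_curvature_isoparametric_four (θ : ℝ) (h0 : 0 < θ) (h4 : θ < π / 4) :
    Real.cot (θ + 3 * π / 4) < Real.cot (θ + π / 2) ∧
    Real.cot (θ + π / 2) < Real.cot (θ + π / 4) ∧
    Real.cot (θ + π / 4) < Real.cot θ ∧
    Real.cot (θ + 3 * π / 4) - Real.cot (θ + π / 2) ≠ 0 ∧
    Real.cot θ - Real.cot (θ + π / 4) ≠ 0 ∧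
    Real.cot (θ + 3 * π / 4) - Real.cot (θ + π / 4) ≠ 0 ∧
    Real.cot θ - Real.cot (θ + π / 2) ≠ 0 ∧
    ((Real.cot (θ + 3 * π / 4) - Real.cot (θ + π / 2)) *
        (Real.cot θ - Real.cot (θ + π / 4))) /
      ((Real.cot (θ + 3 * π / 4) - Real.cot (θ + π / 4)) *
        (Real.cot θ - Real.cot (θ + π / 2))) = 1 / 2 := by
  have hpi := Real.pi_pos
  have hs : 0 < Real.sin θ := Real.sin_pos_of_pos_of_lt_pi h0 (by linarith)
  have hc : 0 < Real.cos θ := Real.cos_pos_of_mem_Ioo ⟨by linarith, by linarith⟩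
  have hsin4 : Real.sin θ < Real.sqrt 2 / 2 := by
    have := Real.sin_lt_sin_of_lt_of_le_pi_div_two (by linarith : -(π/2) ≤ θ)
      (by linarith : π/4 ≤ π/2) h4
    rwa [Real.sin_pi_div_four] at this
  have hcos4 : Real.sqrt 2 / 2 < Real.cos θ := by
    have := Real.cos_lt_cos_of_nonneg_of_le_pi (le_of_lt h0) (by linarith : π/4 ≤ π) h4
    rwa [Real.cos_pi_div_four] at this
  have hcs : Real.sin θ < Real.cos θ := lt_trans hsin4 hcos4
  have hcs' : 0 < Real.cos θ - Real.sin θ := by linarith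
  have hsc : 0 < Real.cos θ + Real.sin θ := by linarith
  have h2 : Real.sqrt 2 ≠ 0 := by positivity
  set s := Real.sin θ with hsdef
  set c := Real.cos θ with hcdef
  have hs0 : s ≠ 0 := ne_of_gt hs
  have hc0 : c ≠ 0 := ne_of_gt hc
  have hd0 : c - s ≠ 0 := ne_of_gt hcs'
  have hp0 : c + s ≠ 0 := ne_of_gt hsc
  have pyth : s ^ 2 + c ^ 2 = 1 := Real.sin_sq_add_cos_sq θ
  -- expressions for the four cotangents
  have e4 : Real.cot θ = c / s := Real.cot_eq_cos_div_sin θ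
  have e3 : Real.cot (θ + π / 4) = (c - s) / (c + s) := by
    rw [Real.cot_eq_cos_div_sin, Real.cos_add, Real.sin_add, Real.cos_pi_div_four,
      Real.sin_pi_div_four, ← hsdef, ← hcdef]
    rw [div_eq_div_iff (by positivity) hp0]
    ring
  have e2 : Real.cot (θ + π / 2) = -s / c := by
    rw [Real.cot_eq_cos_div_sin, Real.cos_add, Real.sin_add, Real.cos_pi_div_two,
      Real.sin_pi_div_two, ← hsdef, ← hcdef]
    rw [div_eq_div_iff (by nlinarith) hc0]
    ring
  have e1 : Real.cot (θ + 3 * π / 4) = -(c + s) / (c - s) := by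
    have h34 : θ + 3 * π / 4 = (θ + π / 4) + π / 2 := by ring
    have hr2 : (0:ℝ) < Real.sqrt 2 := by positivity
    rw [h34, Real.cot_eq_cos_div_sin, Real.cos_add_pi_div_two, Real.sin_add_pi_div_two,
      Real.cos_add, Real.sin_add, Real.cos_pi_div_four, Real.sin_pi_div_four,
      ← hsdef, ← hcdef]
    rw [div_eq_div_iff (by nlinarith) hd0]
    ring
  -- the differences
  have d12 : Real.cot (θ + 3 * π / 4) - Real.cot (θ + π / 2) = -(1 / (c * (c - s))) := by
    rw [e1, e2]; field_simp; linear_combination (-1) * pyth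
  have d43 : Real.cot θ - Real.cot (θ + π / 4) = 1 / (s * (c + s)) := by
    rw [e4, e3]; field_simp; linear_combination pyth
  have d13 : Real.cot (θ + 3 * π / 4) - Real.cot (θ + π / 4) = -(2 / ((c - s) * (c + s))) := by
    rw [e1, e3]; field_simp; linear_combination (-2) * pyth
  have d42 : Real.cot θ - Real.cot (θ + π / 2) = 1 / (s * c) := by
    rw [e4, e2]; field_simp; linear_combination pyth
  have d32 : Real.cot (θ + π / 4) - Real.cot (θ + π / 2) = 1 / (c * (c + s)) := by
    rw [e3, e2]; field_simp; linear_combination pyth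
  have p12 : (0:ℝ) < 1 / (c * (c - s)) := by positivity
  have p43 : (0:ℝ) < 1 / (s * (c + s)) := by positivity
  have p13 : (0:ℝ) < 2 / ((c - s) * (c + s)) := by positivity
  have p42 : (0:ℝ) < 1 / (s * c) := by positivity
  have p32 : (0:ℝ) < 1 / (c * (c + s)) := by positivity
  refine ⟨by linarith [d12], by linarith [d32], by linarith [d43],
    by rw [d12]; linarith, by rw [d43]; linarith, by rw [d13]; linarith,
    by rw [d42]; linarith, ?_⟩
  rw [d12, d43, d13, d42]
  field_simp
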